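/- arXiv:0806.3295 — 3 statements merged into one kernel-verified Lean document; each statement's English description precedes it below -/
import Mathlib

section
/- Let Ψ(x) = ∑_{n≤x} Λ(n) be the Chebyshev function and suppose f is an increasing positive function with Ψ(x) = x + O(f(x)). Then ∑_{n≤x} G(n) = x²/2 + O(x·f(x)), where G(n) = ∑_{k₁+k₂=n} Λ(k₁)Λ(k₂). -/
open ArithmeticFunction MeasureTheory Finset Real


noncomputable def G (n : ℕ) : ℝ := ∑ p ∈ Finset.HasAntidiagonal.antidiagonal n, Λ p.1 * Λ p.2

noncomputable def Psi (x : ℝ) : ℝ := ∑ n ∈ Finset.Icc 1 ⌊x⌋₊, Λ n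

noncomputable def e (α : ℝ) : ℂ := Complex.exp (2 * Real.pi * Complex.I * α)

noncomputable def Texp (x : ℝ) (α : ℝ) : ℂ := ∑ n ∈ Finset.Icc 1 ⌊x⌋₊, e (α * n)

noncomputable def Sexp (x : ℝ) (α : ℝ) : ℂ := ∑ n ∈ Finset.Icc 1 ⌊x⌋₊, (Λ n : ℂ) * e (α * n)

noncomputable def Rexp (x : ℝ) (α : ℝ) : ℂ := Sexp x α - Texp x α

private lemma log_sq_le (N : ℕ) : Real.log N ^ 2 ≤ 16 * Real.sqrt N := by
  rcases Nat.eq_zero_or_pos N with h | h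
  · simp [h]
  have hN : (0:ℝ) < N := by exact_mod_cast h
  have h1 : Real.log N = 4 * Real.log (Real.sqrt (Real.sqrt N)) := by
    rw [Real.log_sqrt (Real.sqrt_nonneg _), Real.log_sqrt hN.le]; ring
  have h2 : Real.log (Real.sqrt (Real.sqrt N)) ≤ Real.sqrt (Real.sqrt N) := by
    have := Real.log_le_sub_one_of_pos (x := Real.sqrt (Real.sqrt N)) (by positivity)
    linarith
  have h3 : (0:ℝ) ≤ Real.log N := Real.log_natCast_nonneg N
  have h4 : Real.sqrt (Real.sqrt N) ^ 2 = Real.sqrt N := Real.sq_sqrt (Real.sqrt_nonneg _)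
  nlinarith [Real.sqrt_nonneg (Real.sqrt (N:ℝ))]

private lemma psi_nat_le (N : ℕ) : ∑ m ∈ Icc 1 N, Λ m ≤ 40 * N := by
  rcases Nat.eq_zero_or_pos N with h | h
  · simp [h]
  have hN0 : N ≠ 0 := h.ne'
  have hNR : (0:ℝ) < N := by exact_mod_cast h
  have hlogN : (0:ℝ) ≤ Real.log N := Real.log_natCast_nonneg N
  rw [← sum_filter_add_sum_filter_not (Icc 1 N) Nat.Prime Λ]
  have hset : (Icc 1 N).filter Nat.Prime = (range (N+1)).filter Nat.Prime := by
    ext m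
    simp only [mem_filter, mem_Icc, mem_range, Nat.lt_succ_iff]
    exact ⟨fun ⟨⟨_, h2⟩, hp⟩ => ⟨h2, hp⟩, fun ⟨h2, hp⟩ => ⟨⟨hp.pos, h2⟩, hp⟩⟩
  have h1 : ∑ m ∈ (Icc 1 N).filter Nat.Prime, Λ m ≤ (N:ℝ) * Real.log 4 := by
    have he : ∑ m ∈ (Icc 1 N).filter Nat.Prime, Λ m
        = Real.log ((primorial N : ℕ) : ℝ) := by
      rw [show ((primorial N : ℕ) : ℝ) = ∏ m ∈ (range (N+1)).filter Nat.Prime, (m:ℝ) by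
        rw [primorial]; push_cast; rfl]
      rw [Real.log_prod (fun x hx => by
        have := (mem_filter.mp hx).2.pos
        positivity), ← hset]
      exact sum_congr rfl fun m hm => vonMangoldt_apply_prime (mem_filter.mp hm).2
    rw [he]
    calc Real.log ((primorial N : ℕ) : ℝ) ≤ Real.log ((4:ℝ) ^ N) := by
          apply Real.log_le_log (by exact_mod_cast primorial_pos N)
          exact_mod_cast primorial_le_4_pow N
      _ = (N:ℝ) * Real.log 4 := by rw [Real.log_pow]
  have h2 : ∑ m ∈ (Icc 1 N).filter (fun m => ¬ m.Prime), Λ m ≤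
      (Real.sqrt N * (2 * Real.log N)) * Real.log N := by
    set t := (Icc 1 N).filter (fun m => ¬ m.Prime) with ht
    have hrestrict : ∑ m ∈ t, Λ m = ∑ m ∈ t.filter IsPrimePow, Λ m :=
      (sum_filter_of_ne (fun m _ hm => vonMangoldt_ne_zero_iff.mp hm)).symm
    rw [hrestrict]
    set A := t.filter IsPrimePow with hA
    have hkey : ∀ m ∈ A, m.minFac ≤ Nat.sqrt N ∧ 2 ≤ m.factorization m.minFac ∧
        m.factorization m.minFac ≤ Nat.log 2 N := by
      intro m hm
      simp only [hA, ht, mem_filter, mem_Icc] at hm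
      obtain ⟨⟨⟨hm1, hmN⟩, hnp⟩, hpp⟩ := hm
      have hne1 : m ≠ 1 := hpp.ne_one
      have hpfe := hpp.minFac_pow_factorization_eq
      have hp : m.minFac.Prime := Nat.minFac_prime hne1
      set k := m.factorization m.minFac with hk
      have hk0 : k ≠ 0 := by
        intro h0; rw [h0, pow_zero] at hpfe; exact hne1 hpfe.symm
      have hk1 : k ≠ 1 := by
        intro h1; rw [h1, pow_one] at hpfe; rw [← hpfe] at hnp; exact hnp hp
      have hk2 : 2 ≤ k := by omega
      refine ⟨?_, hk2, ?_⟩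
      · rw [Nat.le_sqrt]
        calc m.minFac * m.minFac = m.minFac ^ 2 := (sq _).symm
          _ ≤ m.minFac ^ k := Nat.pow_le_pow_right hp.pos hk2
          _ = m := hpfe
          _ ≤ N := hmN
      · rw [Nat.le_log_iff_pow_le one_lt_two hN0]
        calc 2 ^ k ≤ m.minFac ^ k := Nat.pow_le_pow_left hp.two_le k
          _ = m := hpfe
          _ ≤ N := hmN
    have hcard : A.card ≤ Nat.sqrt N * Nat.log 2 N := by
      have hinj := card_le_card_of_injOn
        (fun m => (m.minFac, m.factorization m.minFac))
        (s := A) (t := Icc 2 (Nat.sqrt N) ×ˢ Icc 2 (Nat.log 2 N))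
        (fun m hm => by
          obtain ⟨hs, hk2, hkl⟩ := hkey m hm
          have hne1 : m ≠ 1 := by
            simp only [Finset.mem_coe, hA, mem_filter] at hm; exact hm.2.ne_one
          have hp := Nat.minFac_prime hne1
          simp only [Finset.mem_coe, mem_product, mem_Icc]
          exact ⟨⟨hp.two_le, hs⟩, ⟨hk2, hkl⟩⟩)
        (fun a ha b hb hab => by
          have hae : a.minFac ^ a.factorization a.minFac = a :=
            (mem_filter.mp (mem_coe.mp ha)).2.minFac_pow_factorization_eq
          have hbe : b.minFac ^ b.factorization b.minFac = b :=
            (mem_filter.mp (mem_coe.mp hb)).2.minFac_pow_factorization_eq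
          obtain ⟨h1, h2⟩ := Prod.ext_iff.mp hab
          rw [← hae, ← hbe]
          simp only at h1 h2
          rw [h2, h1])
      calc A.card ≤ (Icc 2 (Nat.sqrt N) ×ˢ Icc 2 (Nat.log 2 N)).card := hinj
        _ = (Icc 2 (Nat.sqrt N)).card * (Icc 2 (Nat.log 2 N)).card := card_product _ _
        _ ≤ Nat.sqrt N * Nat.log 2 N := by
            rw [Nat.card_Icc, Nat.card_Icc]; exact Nat.mul_le_mul (by omega) (by omega)
    have hsum : ∑ m ∈ A, Λ m ≤ (A.card : ℝ) * Real.log N := by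
      have := sum_le_card_nsmul A Λ (Real.log N) (fun m hm => by
        simp only [hA, ht, mem_filter, mem_Icc] at hm
        have hm1 : (1:ℝ) ≤ m := by exact_mod_cast hm.1.1.1
        calc Λ m ≤ Real.log m := vonMangoldt_le_log
          _ ≤ Real.log N := Real.log_le_log (by linarith) (by exact_mod_cast hm.1.1.2))
      simpa [nsmul_eq_mul] using this
    have hs1 : (Nat.sqrt N : ℝ) ≤ Real.sqrt N := by
      rw [Real.le_sqrt (by positivity) (by positivity)]
      exact_mod_cast Nat.sqrt_le' N
    have hL : (Nat.log 2 N : ℝ) ≤ 2 * Real.log N := by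
      have hpow : ((2:ℕ) ^ (Nat.log 2 N) : ℝ) ≤ (N : ℝ) := by
        exact_mod_cast Nat.pow_log_le_self 2 hN0
      have hll := Real.log_le_log (by positivity) hpow
      rw [show ((2:ℕ)^(Nat.log 2 N) : ℝ) = (2:ℝ)^(Nat.log 2 N) by push_cast; ring,
        Real.log_pow] at hll
      have l2 : (0.6931471803:ℝ) < Real.log 2 := Real.log_two_gt_d9
      nlinarith [show (0:ℝ) ≤ (Nat.log 2 N : ℝ) by positivity]
    calc ∑ m ∈ A, Λ m ≤ (A.card : ℝ) * Real.log N := hsum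
      _ ≤ ((Nat.sqrt N : ℝ) * (Nat.log 2 N : ℝ)) * Real.log N := by
          apply mul_le_mul_of_nonneg_right _ hlogN
          exact_mod_cast hcard
      _ ≤ (Real.sqrt N * (2 * Real.log N)) * Real.log N := by
          apply mul_le_mul_of_nonneg_right _ hlogN
          exact mul_le_mul hs1 hL (Nat.cast_nonneg _) (Real.sqrt_nonneg _)
  have hlog4 : Real.log 4 ≤ 3 := by
    have := Real.log_le_sub_one_of_pos (x := 4) (by norm_num); linarith
  have hsq := log_sq_le N
  have hs2 : Real.sqrt (N:ℝ) ^ 2 = N := Real.sq_sqrt hNR.le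
  nlinarith [Real.sqrt_nonneg (N:ℝ), h1, h2]

private noncomputable def psiN (m : ℕ) : ℝ := ∑ b ∈ Finset.Icc 1 m, Λ b

private lemma psiN_zero : psiN 0 = 0 := by simp [psiN]

private lemma psiN_succ (m : ℕ) : psiN (m + 1) = psiN m + Λ (m + 1) := by
  rw [psiN, psiN, sum_Icc_succ_top (by omega)]

private lemma psiN_nonneg (m : ℕ) : 0 ≤ psiN m :=
  Finset.sum_nonneg fun _ _ => vonMangoldt_nonneg

private lemma G_succ (N : ℕ) : G (N + 1) = ∑ a ∈ Icc 1 N, Λ a * Λ (N + 1 - a) := by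
  rw [G, Finset.Nat.sum_antidiagonal_eq_sum_range_succ_mk]
  refine (Finset.sum_subset (fun a ha => ?_) (fun a ha hna => ?_)).symm
  · simp only [mem_Icc] at ha; simp only [mem_range]; omega
  · simp only [mem_range] at ha
    simp only [mem_Icc, not_and, not_le] at hna
    rcases Nat.eq_zero_or_pos a with h0 | h0
    · simp [h0]
    · have : a = N + 1 := by omega
      simp [this]

private lemma key1 (N : ℕ) :
    ∑ n ∈ Icc 1 N, G n = ∑ a ∈ Icc 1 N, Λ a * psiN (N - a) := by
  induction N with
  | zero => simp
  | succ N ih =>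
    rw [sum_Icc_succ_top (by omega), ih, G_succ,
      sum_Icc_succ_top (a := 1) (b := N) (by omega)]
    have h1 : ∀ a ∈ Icc 1 N, Λ a * psiN (N + 1 - a)
        = Λ a * psiN (N - a) + Λ a * Λ (N + 1 - a) := by
      intro a ha
      simp only [mem_Icc] at ha
      have h : N + 1 - a = (N - a) + 1 := by omega
      rw [h, psiN_succ, ← h, mul_add]
    rw [sum_congr rfl h1, sum_add_distrib]
    simp [psiN_zero]

private lemma key2 (N : ℕ) :
    ∑ a ∈ Icc 1 N, Λ a * ((N : ℝ) - (a : ℝ)) = ∑ m ∈ range N, psiN m := by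
  induction N with
  | zero => simp
  | succ N ih =>
    rw [sum_range_succ, ← ih, sum_Icc_succ_top (a := 1) (b := N) (by omega)]
    push_cast
    have h1 : ∀ a ∈ Icc 1 N, Λ a * ((N : ℝ) + 1 - (a : ℝ))
        = Λ a * ((N : ℝ) - (a : ℝ)) + Λ a := by
      intro a ha; ring
    rw [sum_congr rfl h1, sum_add_distrib]
    simp [psiN]

private lemma gauss (N : ℕ) : ∑ m ∈ range N, ((m : ℕ) : ℝ) = N * (N - 1) / 2 := by
  induction N with
  | zero => simp
  | succ N ih =>
    rw [sum_range_succ, ih]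
    push_cast
    ring

theorem stmt1 (f : ℝ → ℝ) (hf : StrictMono f) (hfpos : ∀ x ≥ 2, 0 < f x)
    (hpsi : ∃ C : ℝ, ∀ x ≥ 2, |Psi x - x| ≤ C * f x) :
    ∃ C : ℝ, ∀ x ≥ 2, |(∑ n ∈ Finset.Icc 1 ⌊x⌋₊, G n) - x ^ 2 / 2| ≤ C * x * f x := by
  obtain ⟨C, hC⟩ := hpsi
  have hf2 : 0 < f 2 := hfpos 2 le_rfl
  set D : ℝ := max C 0 + 1 / f 2 with hDdef
  have hD : 0 < D := add_pos_of_nonneg_of_pos (le_max_right C 0) (one_div_pos.mpr hf2)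
  refine ⟨41 * D + 2 / f 2, fun x hx => ?_⟩
  have hfx : 0 < f x := hfpos x hx
  have hf2x : f 2 ≤ f x := hf.monotone hx
  set N := ⌊x⌋₊ with hNdef
  have hN2 : 2 ≤ N := Nat.le_floor (by exact_mod_cast hx)
  have hNx : (N : ℝ) ≤ x := Nat.floor_le (by linarith)
  have hxN : x < (N : ℝ) + 1 := Nat.lt_floor_add_one x
  have hx0 : (0:ℝ) ≤ x := by linarith
  have hNR : (2:ℝ) ≤ N := by exact_mod_cast hN2
  have hone : 1 ≤ (1 / f 2) * f x := by
    rw [one_div, inv_mul_eq_div, le_div_iff₀ hf2, one_mul]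
    exact hf2x
  -- remainder bound
  have hR : ∀ m : ℕ, m ≤ N → |psiN m - (m : ℝ)| ≤ D * f x := by
    intro m hm
    have hmaxfx : 0 ≤ max C 0 * f x := mul_nonneg (le_max_right C 0) hfx.le
    rcases m with _ | _ | m
    · simpa [psiN_zero] using mul_nonneg hD.le hfx.le
    · have hp1 : psiN 1 = 0 := by simp [psiN, vonMangoldt_apply_one]
      rw [hp1]
      rw [show |(0:ℝ) - (1:ℕ)| = 1 by norm_num]
      rw [hDdef, add_mul]
      linarith
    · have hm2 : (2:ℝ) ≤ ((m + 2 : ℕ) : ℝ) := by push_cast; linarith [Nat.cast_nonneg (α := ℝ) m]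
      have hPsi : Psi ((m + 2 : ℕ) : ℝ) = psiN (m + 2) := by
        rw [Psi, psiN, Nat.floor_natCast]
      have hCb := hC ((m + 2 : ℕ) : ℝ) hm2
      rw [hPsi] at hCb
      have hfm : 0 < f ((m + 2 : ℕ) : ℝ) := hfpos _ hm2
      have hle : ((m + 2 : ℕ) : ℝ) ≤ x := le_trans (by exact_mod_cast hm) hNx
      have hfmx : f ((m + 2 : ℕ) : ℝ) ≤ f x := hf.monotone hle
      calc |psiN (m + 2) - ((m + 2 : ℕ) : ℝ)| ≤ C * f ((m + 2 : ℕ) : ℝ) := hCb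
        _ ≤ max C 0 * f ((m + 2 : ℕ) : ℝ) :=
            mul_le_mul_of_nonneg_right (le_max_left C 0) hfm.le
        _ ≤ max C 0 * f x := mul_le_mul_of_nonneg_left hfmx (le_max_right C 0)
        _ ≤ D * f x := by rw [hDdef, add_mul]; nlinarith
  -- E1
  have hE1 : |∑ a ∈ Icc 1 N, Λ a * (psiN (N - a) - ((N:ℝ) - (a:ℝ)))| ≤ 40 * D * (x * f x) := by
    calc |∑ a ∈ Icc 1 N, Λ a * (psiN (N - a) - ((N:ℝ) - (a:ℝ)))|
        ≤ ∑ a ∈ Icc 1 N, |Λ a * (psiN (N - a) - ((N:ℝ) - (a:ℝ)))| := abs_sum_le_sum_abs _ _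
      _ ≤ ∑ a ∈ Icc 1 N, Λ a * (D * f x) := by
          refine sum_le_sum fun a ha => ?_
          rw [abs_mul, abs_of_nonneg vonMangoldt_nonneg]
          refine mul_le_mul_of_nonneg_left ?_ vonMangoldt_nonneg
          have ha' := mem_Icc.mp ha
          have hcast : ((N:ℝ) - (a:ℝ)) = ((N - a : ℕ) : ℝ) := by
            rw [Nat.cast_sub ha'.2]
          rw [hcast]
          exact hR (N - a) (by omega)
      _ = (∑ a ∈ Icc 1 N, Λ a) * (D * f x) := by rw [sum_mul]
      _ ≤ (40 * N) * (D * f x) :=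
          mul_le_mul_of_nonneg_right (psi_nat_le N) (by positivity)
      _ ≤ 40 * D * (x * f x) := by
          nlinarith [mul_le_mul_of_nonneg_right hNx (mul_nonneg hD.le hfx.le)]
  -- E2
  have hE2 : |(∑ m ∈ range N, psiN m) - (N:ℝ) * ((N:ℝ) - 1) / 2| ≤ D * (x * f x) := by
    have hrw : (∑ m ∈ range N, psiN m) - (N:ℝ) * ((N:ℝ) - 1) / 2
        = ∑ m ∈ range N, (psiN m - (m : ℝ)) := by
      rw [sum_sub_distrib, gauss]
    rw [hrw]
    calc |∑ m ∈ range N, (psiN m - (m:ℝ))| ≤ ∑ m ∈ range N, |psiN m - (m:ℝ)| :=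
          abs_sum_le_sum_abs _ _
      _ ≤ ∑ _m ∈ range N, D * f x :=
          sum_le_sum fun m hm => hR m (le_of_lt (mem_range.mp hm))
      _ = (N : ℝ) * (D * f x) := by rw [sum_const, card_range, nsmul_eq_mul]
      _ ≤ D * (x * f x) := by
          nlinarith [mul_le_mul_of_nonneg_right hNx (mul_nonneg hD.le hfx.le)]
  -- E3
  have hE3 : |(N:ℝ) * ((N:ℝ) - 1) / 2 - x ^ 2 / 2| ≤ (2 / f 2) * (x * f x) := by
    have h1 : (N:ℝ) * ((N:ℝ) - 1) ≤ x ^ 2 := by nlinarith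
    have h2 : x ^ 2 ≤ (N:ℝ) * ((N:ℝ) - 1) + 4 * x := by nlinarith
    have habs : |(N:ℝ) * ((N:ℝ) - 1) / 2 - x ^ 2 / 2| ≤ 2 * x := by
      rw [abs_le]; constructor <;> nlinarith
    have h3 : 2 * x ≤ (2 / f 2) * (x * f x) := by
      rw [div_mul_eq_mul_div, le_div_iff₀ hf2]
      nlinarith
    linarith
  -- assemble
  have e1 : ∑ a ∈ Icc 1 N, Λ a * (psiN (N - a) - ((N:ℝ) - (a:ℝ)))
      = (∑ n ∈ Icc 1 N, G n) - ∑ m ∈ range N, psiN m := by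
    rw [key1, ← key2, ← sum_sub_distrib]
    exact sum_congr rfl fun a _ => by ring
  have hfinal : (∑ n ∈ Icc 1 N, G n) - x ^ 2 / 2
      = (∑ a ∈ Icc 1 N, Λ a * (psiN (N - a) - ((N:ℝ) - (a:ℝ))))
        + ((∑ m ∈ range N, psiN m) - (N:ℝ) * ((N:ℝ) - 1) / 2)
        + ((N:ℝ) * ((N:ℝ) - 1) / 2 - x ^ 2 / 2) := by
    rw [e1]; ring
  rw [hfinal]
  calc |_ + _ + _| ≤ |∑ a ∈ Icc 1 N, Λ a * (psiN (N - a) - ((N:ℝ) - (a:ℝ)))|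
        + |(∑ m ∈ range N, psiN m) - (N:ℝ) * ((N:ℝ) - 1) / 2|
        + |(N:ℝ) * ((N:ℝ) - 1) / 2 - x ^ 2 / 2| := abs_add_three _ _ _
    _ ≤ 40 * D * (x * f x) + D * (x * f x) + (2 / f 2) * (x * f x) :=
        add_le_add_three hE1 hE2 hE3
    _ = (41 * D + 2 / f 2) * x * f x := by ring
end

section
/- Let c₁,…,c_N be complex numbers and S(t) = ∑_{n=1}^N c_n e(tn) with e(α)=e^{2πiα}. Then for y > 0, ∫_{-1/y}^{1/y} |S(t)|² dt ≪ y^{-2} ∫_{-∞}^{∞} |A(x)|² dx, where A(x) = ∑_{n ≤ N, |n−x| ≤ y/4} c_n. (Gallagher's lemma.) -/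
open ArithmeticFunction MeasureTheory Finset Real


open Complex FourierTransform intervalIntegral

noncomputable def tri (y u : ℝ) : ℝ := max (y/2 - |u|) 0

noncomputable def Wf (y t : ℝ) : ℝ :=
  if t = 0 then (y/2)^2 else (Real.sin (π*t*y/2))^2/(π*t)^2

lemma int_lin_exp (k : ℂ) (hk : k ≠ 0) (c : ℝ) :
    ∫ u in (0:ℝ)..c, ((c - u : ℝ) : ℂ) * Complex.exp (k * u)
      = (Complex.exp (k * c) - k * c - 1) / k ^ 2 := by
  have hder : ∀ u ∈ Set.uIcc (0:ℝ) c,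
      HasDerivAt (fun u : ℝ => Complex.exp (k * u) * (k * (c - u) + 1) / k ^ 2)
        (((c - u : ℝ) : ℂ) * Complex.exp (k * u)) u := by
    intro u _
    have h1 : HasDerivAt (fun u : ℝ => k * (u:ℂ)) k u := by
      simpa using ((Complex.ofRealCLM.hasDerivAt (x := u)).const_mul k)
    have h2 : HasDerivAt (fun u : ℝ => Complex.exp (k * u)) (Complex.exp (k * u) * k) u :=
      h1.cexp
    have h3 : HasDerivAt (fun u : ℝ => k * ((c:ℂ) - u) + 1) (-k) u := by
      simpa using (((Complex.ofRealCLM.hasDerivAt (x := u)).const_sub (c:ℂ)).const_mul k).add_const 1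
    have := (h2.mul h3).div_const (k ^ 2)
    convert this using 1
    case e'_4 => rfl
    case e'_8 => rfl
    push_cast
    field_simp
    ring
  have hint : IntervalIntegrable (fun u : ℝ => ((c - u : ℝ) : ℂ) * Complex.exp (k * u)) volume 0 c := by
    apply Continuous.intervalIntegrable; continuity
  rw [intervalIntegral.integral_eq_sub_of_hasDerivAt hder hint]
  field_simp
  simp
  ring

lemma tri_cont (y : ℝ) : Continuous (tri y) := by
  unfold tri; fun_prop

lemma tri_zero {y u : ℝ} (h : y/2 ≤ |u|) : tri y u = 0 := by
  simp [tri, max_eq_right, sub_nonpos.mpr h]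

lemma tri_eq {y u : ℝ} (h0 : 0 ≤ u) (h : u ≤ y/2) : tri y u = y/2 - u := by
  rw [tri, _root_.abs_of_nonneg h0, max_eq_left (by linarith)]

lemma tri_neg (y u : ℝ) : tri y (-u) = tri y u := by simp [tri]

lemma integral_tri_mul (y : ℝ) (hy : 0 < y) (g : ℝ → ℂ) :
    ∫ v : ℝ, (tri y v : ℂ) * g v = ∫ v in (-(y/2))..(y/2), (tri y v : ℂ) * g v := by
  rw [intervalIntegral.integral_of_le (by linarith), ← integral_Icc_eq_integral_Ioc,
    setIntegral_eq_integral_of_forall_compl_eq_zero]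
  intro x hx
  have : y/2 ≤ |x| := by
    simp only [Set.mem_Icc, not_and_or, not_le] at hx
    rcases hx with h | h
    · rw [abs_of_neg (by linarith)]; linarith
    · rw [_root_.abs_of_pos (by linarith)]; linarith
  simp [tri_zero this]

lemma fourier_tri (y : ℝ) (hy : 0 < y) (t : ℝ) :
    𝓕 (fun u : ℝ => (tri y u : ℂ)) t = (Wf y t : ℂ) := by
  rw [Real.fourier_real_eq_integral_exp_smul]
  rcases eq_or_ne t 0 with rfl | ht
  · have h0 : ∀ v : ℝ, Complex.exp (↑(-2 * π * v * 0) * I) • ((tri y v : ℝ) : ℂ)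
        = (tri y v : ℂ) * 1 := by intro v; simp
    simp_rw [h0, mul_one]
    have h := integral_tri_mul y hy (fun _ => 1)
    simp only [mul_one] at h
    rw [h]
    have h1 : ∫ v in (-(y/2))..(y/2), ((tri y v : ℝ) : ℂ)
        = ((∫ v in (-(y/2))..(y/2), tri y v : ℝ) : ℂ) := by
      rw [intervalIntegral.integral_ofReal]
    rw [h1]
    have h2 : ∫ v in (-(y/2))..(y/2), tri y v = (y/2)^2 := by
      rw [← intervalIntegral.integral_add_adjacent_intervals (b := 0)
        ((tri_cont y).intervalIntegrable _ _) ((tri_cont y).intervalIntegrable _ _)]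
      have e1 : ∫ v in (0:ℝ)..(y/2), tri y v = (y/2)^2/2 := by
        rw [intervalIntegral.integral_congr (g := fun v => y/2 - v)]
        · rw [intervalIntegral.integral_sub (by apply Continuous.intervalIntegrable; continuity)
            (by apply Continuous.intervalIntegrable; continuity)]
          simp [integral_id]
          ring
        · intro v hv
          rw [Set.uIcc_of_le (by linarith)] at hv
          exact tri_eq hv.1 hv.2
      have e2 : ∫ v in (-(y/2))..(0:ℝ), tri y v = (y/2)^2/2 := by
        have := intervalIntegral.integral_comp_neg (a := (0:ℝ)) (b := y/2) (fun v => tri y v)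
        simp only [neg_zero] at this
        rw [← this]
        simp_rw [tri_neg]
        exact e1
      rw [e1, e2]; ring
    rw [h2, Wf]; simp
  · set k : ℂ := (-2 * π * t : ℝ) * I with hk
    set c0 : ℂ := ((y/2 : ℝ) : ℂ) with hc0
    have hkne : k ≠ 0 := by
      rw [hk]
      apply mul_ne_zero _ I_ne_zero
      rw [Complex.ofReal_ne_zero]
      have := Real.pi_ne_zero
      intro hcon
      apply ht
      nlinarith [Real.pi_pos]
    have hcont : Continuous (fun v : ℝ => (tri y v : ℂ) * Complex.exp (k * v)) := by
      apply Continuous.mul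
      · exact Complex.continuous_ofReal.comp (tri_cont y)
      · continuity
    have hrw : ∀ v : ℝ, Complex.exp (↑(-2 * π * v * t) * I) • ((tri y v : ℝ) : ℂ)
        = (tri y v : ℂ) * Complex.exp (k * v) := by
      intro v
      have hexp : (↑(-2 * π * v * t) * I : ℂ) = k * v := by rw [hk]; push_cast; ring
      rw [smul_eq_mul, hexp, mul_comm]
    simp_rw [hrw]
    rw [integral_tri_mul y hy _]
    rw [← intervalIntegral.integral_add_adjacent_intervals (b := 0)
      (hcont.intervalIntegrable _ _) (hcont.intervalIntegrable _ _)]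
    have e1 : ∫ v in (0:ℝ)..(y/2), (tri y v : ℂ) * Complex.exp (k * v)
        = (Complex.exp (k * c0) - k * c0 - 1) / k ^ 2 := by
      rw [intervalIntegral.integral_congr (g := fun v => ((y/2 - v : ℝ) : ℂ) * Complex.exp (k*v))]
      · exact int_lin_exp k hkne (y/2)
      · intro v hv
        rw [Set.uIcc_of_le (by linarith)] at hv
        simp only [tri_eq hv.1 hv.2]
    have e2 : ∫ v in (-(y/2))..(0:ℝ), (tri y v : ℂ) * Complex.exp (k * v)
        = (Complex.exp (-k * c0) + k * c0 - 1) / k ^ 2 := by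
      have hcn := intervalIntegral.integral_comp_neg (a := (0:ℝ)) (b := y/2)
        (fun v => (tri y v : ℂ) * Complex.exp (k * v))
      simp only [neg_zero] at hcn
      rw [← hcn]
      have hpt : ∀ v : ℝ, (tri y (-v) : ℂ) * Complex.exp (k * ((-v : ℝ) : ℂ))
          = (tri y v : ℂ) * Complex.exp ((-k) * v) := by
        intro v
        have : (k * ((-v : ℝ) : ℂ)) = -k * v := by push_cast; ring
        rw [tri_neg, this]
      simp_rw [hpt]
      rw [intervalIntegral.integral_congr (g := fun v => ((y/2 - v : ℝ):ℂ) * Complex.exp ((-k)*v))]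
      · rw [int_lin_exp (-k) (neg_ne_zero.mpr hkne) (y/2), neg_sq]
        ring
      · intro v hv
        rw [Set.uIcc_of_le (by linarith)] at hv
        simp only [tri_eq hv.1 hv.2]
    rw [e1, e2]
    have hcos : Complex.exp (-k * c0) + Complex.exp (k * c0)
        = ((2 * Real.cos (π * t * y) : ℝ) : ℂ) := by
      rw [Complex.ofReal_mul, Complex.ofReal_cos]
      rw [Complex.cos]
      have h1 : -k * c0 = (π * t * y : ℂ) * I := by rw [hk, hc0]; push_cast; ring
      have h2 : k * c0 = -((π * t * y : ℂ) * I) := by rw [hk, hc0]; push_cast; ring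
      rw [h1, h2]
      push_cast
      ring
    have hk2 : k ^ 2 = ((-(4 * π^2 * t^2) : ℝ) : ℂ) := by
      rw [hk]; push_cast
      rw [mul_pow, Complex.I_sq]
      ring
    have final : ((2 * Real.cos (π*t*y) - 2) / (-(4 * π^2 * t^2)) : ℝ) = Wf y t := by
      rw [Wf, if_neg ht]
      have hcsq := Real.cos_two_mul (π*t*y/2)
      have h2x : 2*(π*t*y/2) = π*t*y := by ring
      rw [h2x] at hcsq
      have hscs := Real.sin_sq_add_cos_sq (π*t*y/2)
      have hsin : Real.sin (π*t*y/2)^2 = (1 - Real.cos (π*t*y))/2 := by linarith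
      rw [hsin]
      have h1 : π * t ≠ 0 := mul_ne_zero Real.pi_ne_zero ht
      field_simp
      ring
    have hsum : (Complex.exp (-k * c0) + k * c0 - 1) / k ^ 2
        + (Complex.exp (k * c0) - k * c0 - 1) / k ^ 2
        = (Complex.exp (-k * c0) + Complex.exp (k * c0) - 2) / k ^ 2 := by
      rw [← add_div]; congr 1; ring
    rw [hsum, hcos, hk2, ← final]
    rw [show ((2 * Real.cos (π*t*y) : ℝ) : ℂ) - 2 = ((2 * Real.cos (π*t*y) - 2 : ℝ) : ℂ) by push_cast; ring,
      ← Complex.ofReal_div]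

lemma Wf_nonneg (y t : ℝ) : 0 ≤ Wf y t := by
  rw [Wf]; split <;> positivity

lemma Wf_even (y t : ℝ) : Wf y (-t) = Wf y t := by
  rw [Wf, Wf]
  rcases eq_or_ne t 0 with rfl | ht
  · simp
  · rw [if_neg (neg_ne_zero.mpr ht), if_neg ht]
    have h1 : π * -t * y / 2 = -(π * t * y / 2) := by ring
    rw [h1, Real.sin_neg]
    ring

lemma Wf_le (y : ℝ) (hy : 0 < y) (t : ℝ) : Wf y t ≤ (y/2)^2 := by
  rw [Wf]
  split
  · exact le_rfl
  · rename_i ht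
    have h1 : Real.sin (π*t*y/2)^2 ≤ (π*t*y/2)^2 := Real.sin_sq_le_sq
    have h2 : (0:ℝ) < (π*t)^2 := by
      have : π * t ≠ 0 := mul_ne_zero Real.pi_ne_zero ht
      positivity
    rw [div_le_iff₀ h2]
    calc Real.sin (π*t*y/2)^2 ≤ (π*t*y/2)^2 := h1
    _ = (y/2)^2 * (π*t)^2 := by ring

lemma Wf_meas (y : ℝ) : Measurable (Wf y) := by
  unfold Wf
  apply Measurable.ite
  · exact measurableSet_eq
  · exact measurable_const
  · fun_prop

lemma Wf_integrable (y : ℝ) (hy : 0 < y) : Integrable (Wf y) := by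
  have hmeas : AEStronglyMeasurable (Wf y) (volume : Measure ℝ) :=
    (Wf_meas y).aestronglyMeasurable
  have htail : ∀ t : ℝ, 1 ≤ t → Wf y t ≤ π⁻¹^2 * t ^ (-2 : ℝ) := by
    intro t ht
    have ht0 : t ≠ 0 := by linarith
    have htpos : (0:ℝ) < t := by linarith
    rw [Wf, if_neg ht0]
    have h1 : Real.sin (π*t*y/2)^2 ≤ 1 := by
      nlinarith [Real.neg_one_le_sin (π*t*y/2), Real.sin_le_one (π*t*y/2)]
    have h2 : t ^ (-2:ℝ) = ((t^2)⁻¹ : ℝ) := by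
      rw [Real.rpow_neg htpos.le, show (2:ℝ) = ((2:ℕ):ℝ) by norm_num, Real.rpow_natCast]
    rw [h2, div_le_iff₀ (by positivity : (0:ℝ) < (π*t)^2)]
    have hπ : (0:ℝ) < π := Real.pi_pos
    calc Real.sin (π*t*y/2)^2 ≤ 1 := h1
    _ = π⁻¹ ^ 2 * (t ^ 2)⁻¹ * (π * t) ^ 2 := by rw [mul_pow]; field_simp
  have hIoi : IntegrableOn (Wf y) (Set.Ioi 1) := by
    apply Integrable.mono' ((integrableOn_Ioi_rpow_of_lt (by norm_num : (-2:ℝ) < -1)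
      (by norm_num : (0:ℝ) < 1)).const_mul (π⁻¹^2)) hmeas.restrict
    filter_upwards [MeasureTheory.ae_restrict_mem measurableSet_Ioi] with t ht
    rw [Real.norm_eq_abs, _root_.abs_of_nonneg (Wf_nonneg y t)]
    exact htail t ht.le
  have hIio : IntegrableOn (Wf y) (Set.Iio (-1)) := by
    have hemb : MeasurableEmbedding (fun t : ℝ => -t) :=
      (Homeomorph.neg ℝ).measurableEmbedding
    have hpre : (fun t : ℝ => -t) ⁻¹' (Set.Iio (-1)) = Set.Ioi 1 := by
      ext x
      simp only [Set.mem_preimage, Set.mem_Iio, Set.mem_Ioi]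
      constructor <;> intro h <;> linarith
    have := (Measure.measurePreserving_neg (volume : Measure ℝ)).integrableOn_comp_preimage
      hemb (f := Wf y) (s := Set.Iio (-1))
    rw [← this, hpre]
    apply hIoi.congr_fun _ measurableSet_Ioi
    intro t _
    exact (Wf_even y t).symm
  have hIcc : IntegrableOn (Wf y) (Set.Icc (-1) 1) := by
    apply Integrable.mono' (integrableOn_const (lt_top_iff_ne_top.1 (by
      rw [Real.volume_Icc]; exact ENNReal.ofReal_lt_top)) : IntegrableOn (fun _ => (y/2)^2) _ _)
      hmeas.restrict
    filter_upwards with t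
    rw [Real.norm_eq_abs, _root_.abs_of_nonneg (Wf_nonneg y t)]
    exact Wf_le y hy t
  have huniv : Set.Iio (-1) ∪ (Set.Icc (-1) 1 ∪ Set.Ioi 1) = (Set.univ : Set ℝ) := by
    ext x
    simp only [Set.mem_union, Set.mem_Iio, Set.mem_Icc, Set.mem_Ioi, Set.mem_univ, iff_true]
    by_cases h1 : x < -1
    · tauto
    · by_cases h2 : x ≤ 1
      · exact Or.inr (Or.inl ⟨by linarith, h2⟩)
      · exact Or.inr (Or.inr (by linarith))
  rw [← integrableOn_univ, ← huniv]
  exact (hIio.union (hIcc.union hIoi))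

lemma abs_ge_of_not_mem {y x : ℝ} (hy : 0 < y) (hx : x ∉ Set.Icc (-(y/2)) (y/2)) : y/2 ≤ |x| := by
  simp only [Set.mem_Icc, not_and_or, not_le] at hx
  rcases hx with h | h
  · rw [abs_of_neg (by linarith)]; linarith
  · rw [_root_.abs_of_pos (by linarith)]; linarith

lemma Wf_lower (y : ℝ) (hy : 0 < y) {t : ℝ} (h : |t| ≤ 1/y) : (y/π)^2 ≤ Wf y t := by
  have hπ : (0:ℝ) < π := Real.pi_pos
  rcases eq_or_ne t 0 with rfl | ht
  · rw [Wf, if_pos rfl]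
    apply pow_le_pow_left₀ (by positivity)
    rw [div_le_div_iff₀ hπ (by norm_num)]
    nlinarith [Real.pi_gt_three]
  · rw [Wf, if_neg ht]
    have hty : |t| * y ≤ 1 := by
      calc |t| * y ≤ (1/y) * y := by apply mul_le_mul_of_nonneg_right h hy.le
      _ = 1 := by field_simp
    have habs : |π * t * y / 2| = π * y / 2 * |t| := by
      rw [show π * t * y / 2 = (π * y / 2) * t by ring, abs_mul,
        _root_.abs_of_pos (by positivity)]
    have h1 : |π * t * y / 2| ≤ π / 2 := by
      rw [habs]
      calc π * y / 2 * |t| = π / 2 * (|t| * y) := by ring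
      _ ≤ π / 2 * 1 := by apply mul_le_mul_of_nonneg_left hty (by positivity)
      _ = π / 2 := by ring
    have h2 := Real.mul_abs_le_abs_sin h1
    rw [habs] at h2
    have h3 : |t| * y ≤ |Real.sin (π * t * y / 2)| := by
      calc |t| * y = 2 / π * (π * y / 2 * |t|) := by field_simp
      _ ≤ _ := h2
    have h4 : (|t| * y)^2 ≤ Real.sin (π * t * y / 2)^2 := by
      rw [← _root_.sq_abs (Real.sin _)]
      exact pow_le_pow_left₀ (by positivity) h3 2
    rw [le_div_iff₀ (by positivity : (0:ℝ) < (π*t)^2)]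
    calc (y/π)^2 * (π*t)^2 = (|t| * y)^2 := by
          rw [mul_pow, mul_pow, ← _root_.sq_abs t]; field_simp
    _ ≤ _ := h4

lemma key_inversion (y : ℝ) (hy : 0 < y) (u : ℝ) :
    ∫ t : ℝ, (Wf y t : ℂ) * Complex.exp (2*π*Complex.I*(t*u)) = (tri y u : ℂ) := by
  have hC : Continuous fun u : ℝ => (tri y u : ℂ) :=
    Complex.continuous_ofReal.comp (tri_cont y)
  have hcs : HasCompactSupport fun u : ℝ => (tri y u : ℂ) :=
    HasCompactSupport.intro (isCompact_Icc (a := -(y/2)) (b := y/2)) (fun x hx => by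
      simp [tri_zero (abs_ge_of_not_mem hy hx)])
  have hint : Integrable (fun u : ℝ => (tri y u : ℂ)) :=
    hC.integrable_of_hasCompactSupport hcs
  have hFT : 𝓕 (fun u : ℝ => (tri y u : ℂ)) = fun t => (Wf y t : ℂ) :=
    funext (fourier_tri y hy)
  have hint2 : Integrable (𝓕 (fun u : ℝ => (tri y u : ℂ))) := by
    rw [hFT]; exact (Wf_integrable y hy).ofReal
  have hinv := hint.fourierInv_fourier_eq hint2 (hC.continuousAt (x := u))
  rw [hFT, fourierInv_eq_fourier_neg,
    Real.fourier_real_eq_integral_exp_smul] at hinv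
  rw [← hinv]
  apply MeasureTheory.integral_congr_ae
  filter_upwards with t
  rw [smul_eq_mul, mul_comm]
  congr 1
  push_cast
  ring


lemma e_norm (x : ℝ) : ‖e x‖ = 1 := by
  rw [e, Complex.norm_exp]
  have : (2 * (π:ℂ) * I * x).re = 0 := by simp
  rw [this, Real.exp_zero]

lemma e_conj (x : ℝ) : (starRingEnd ℂ) (e x) = e (-x) := by
  rw [e, e, ← Complex.exp_conj]
  congr 1
  simp [Complex.ext_iff]

lemma e_add (a b : ℝ) : e a * e b = e (a + b) := by
  rw [e, e, e, ← Complex.exp_add]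
  congr 1
  push_cast
  ring

lemma e_cont (u : ℝ) : Continuous fun t : ℝ => e (t * u) := by
  unfold e
  apply Complex.continuous_exp.comp
  continuity

lemma key_e (y : ℝ) (hy : 0 < y) (u : ℝ) :
    ∫ t : ℝ, ((Wf y t : ℝ) : ℂ) * e (t * u) = ((tri y u : ℝ) : ℂ) := by
  rw [← key_inversion y hy u]
  apply MeasureTheory.integral_congr_ae
  filter_upwards with t
  rw [e]
  congr 1
  push_cast
  ring

lemma Wf_e_integrable (y : ℝ) (hy : 0 < y) (u : ℝ) :
    Integrable (fun t : ℝ => ((Wf y t : ℝ) : ℂ) * e (t * u)) := by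
  apply Integrable.mono' (Wf_integrable y hy)
  · exact ((Complex.measurable_ofReal.comp (Wf_meas y)).aestronglyMeasurable.mul
      (e_cont u).aestronglyMeasurable)
  · filter_upwards with t
    rw [norm_mul, e_norm, mul_one, Complex.norm_real, Real.norm_eq_abs,
      _root_.abs_of_nonneg (Wf_nonneg y t)]

lemma Sside (y : ℝ) (hy : 0 < y) (N : ℕ) (c : ℕ → ℂ) :
    ((∫ t : ℝ, Wf y t * ‖∑ n ∈ Finset.Icc 1 N, c n * e (t * n)‖ ^ 2 : ℝ) : ℂ)
      = ∑ n ∈ Finset.Icc 1 N, ∑ m ∈ Finset.Icc 1 N,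
          (c n * (starRingEnd ℂ) (c m)) * ((tri y ((n:ℝ) - (m:ℝ)) : ℝ) : ℂ) := by
  set s := Finset.Icc 1 N with hs
  set S : ℝ → ℂ := fun t => ∑ n ∈ s, c n * e (t * n) with hS
  have hexp : ∀ t : ℝ, ((Wf y t : ℝ) : ℂ) * (S t * (starRingEnd ℂ) (S t))
      = ∑ n ∈ s, ∑ m ∈ s, (c n * (starRingEnd ℂ) (c m))
          * (((Wf y t : ℝ) : ℂ) * e (t * ((n:ℝ) - (m:ℝ)))) := by
    intro t
    rw [hS]
    simp only [map_sum, map_mul]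
    rw [Finset.sum_mul_sum]
    rw [Finset.mul_sum]
    apply Finset.sum_congr rfl; intro n _
    rw [Finset.mul_sum]
    apply Finset.sum_congr rfl; intro m _
    rw [e_conj]
    have h1 : e (t * (n:ℝ)) * e (-(t * (m:ℝ))) = e (t * ((n:ℝ) - (m:ℝ))) := by
      rw [e_add]
      congr 1
      ring
    calc ((Wf y t : ℝ) : ℂ) * (c n * e (t * (n:ℝ)) * ((starRingEnd ℂ) (c m) * e (-(t * (m:ℝ)))))
        = (c n * (starRingEnd ℂ) (c m)) * (((Wf y t : ℝ) : ℂ)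
            * (e (t * (n:ℝ)) * e (-(t * (m:ℝ))))) := by ring
      _ = _ := by rw [h1]
  calc ((∫ t : ℝ, Wf y t * ‖S t‖ ^ 2 : ℝ) : ℂ)
      = ∫ t : ℝ, ((Wf y t * ‖S t‖ ^ 2 : ℝ) : ℂ) := (_root_.integral_ofReal).symm
    _ = ∫ t : ℝ, ((Wf y t : ℝ) : ℂ) * (S t * (starRingEnd ℂ) (S t)) := by
        apply MeasureTheory.integral_congr_ae
        filter_upwards with t
        rw [Complex.mul_conj']
        push_cast
        ring
    _ = ∫ t : ℝ, ∑ n ∈ s, ∑ m ∈ s, (c n * (starRingEnd ℂ) (c m))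
          * (((Wf y t : ℝ) : ℂ) * e (t * ((n:ℝ) - (m:ℝ)))) := by
        apply MeasureTheory.integral_congr_ae
        filter_upwards with t
        exact hexp t
    _ = ∑ n ∈ s, ∑ m ∈ s, (c n * (starRingEnd ℂ) (c m)) * ((tri y ((n:ℝ) - (m:ℝ)) : ℝ) : ℂ) := by
        rw [MeasureTheory.integral_finset_sum s (fun n _ =>
          integrable_finset_sum s (fun m _ => (Wf_e_integrable y hy _).const_mul _))]
        apply Finset.sum_congr rfl; intro n _
        rw [MeasureTheory.integral_finset_sum s (fun m _ => (Wf_e_integrable y hy _).const_mul _)]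
        apply Finset.sum_congr rfl; intro m _
        rw [MeasureTheory.integral_const_mul, key_e y hy]

lemma overlap (y : ℝ) (hy : 0 < y) (a b : ℝ) :
    (volume (Set.Icc (a - y/4) (a + y/4) ∩ Set.Icc (b - y/4) (b + y/4))).toReal
      = tri y (a - b) := by
  rw [Set.Icc_inter_Icc, Real.volume_Icc]
  have hmm : (a + y/4) ⊓ (b + y/4) - (a - y/4) ⊔ (b - y/4) = y/2 - |a - b| := by
    rcases le_total a b with h | h
    · rw [abs_of_nonpos (by linarith),
        min_eq_left (by linarith), max_eq_right (by linarith)]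
      ring
    · rw [_root_.abs_of_nonneg (by linarith),
        min_eq_right (by linarith), max_eq_left (by linarith)]
      ring
  rw [hmm, tri]
  rcases le_total (y/2 - |a - b|) 0 with h | h
  · rw [ENNReal.ofReal_of_nonpos h, max_eq_right h, ENNReal.toReal_zero]
  · rw [ENNReal.toReal_ofReal h, max_eq_left h]

lemma Aside (y : ℝ) (hy : 0 < y) (N : ℕ) (c : ℕ → ℂ) :
    ((∫ x : ℝ, ‖∑ n ∈ (Finset.Icc 1 N).filter (fun n : ℕ => |(n : ℝ) - x| ≤ y / 4), c n‖ ^ 2 : ℝ) : ℂ)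
      = ∑ n ∈ Finset.Icc 1 N, ∑ m ∈ Finset.Icc 1 N,
          (c n * (starRingEnd ℂ) (c m)) * ((tri y ((n:ℝ) - (m:ℝ)) : ℝ) : ℂ) := by
  set s := Finset.Icc 1 N with hs
  set In : ℕ → Set ℝ := fun n => Set.Icc ((n:ℝ) - y/4) ((n:ℝ) + y/4) with hIn
  have hiff : ∀ (n : ℕ) (x : ℝ), |(n:ℝ) - x| ≤ y/4 ↔ x ∈ In n := by
    intro n x
    rw [hIn]
    simp only [Set.mem_Icc, abs_le]
    constructor
    · rintro ⟨h1, h2⟩; constructor <;> linarith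
    · rintro ⟨h1, h2⟩; constructor <;> linarith
  set A : ℝ → ℂ := fun x => ∑ n ∈ s, (In n).indicator (fun _ => c n) x with hA
  have hAeq : ∀ x : ℝ, (∑ n ∈ s.filter (fun n : ℕ => |(n : ℝ) - x| ≤ y / 4), c n) = A x := by
    intro x
    rw [hA, Finset.sum_filter]
    apply Finset.sum_congr rfl
    intro n _
    rw [Set.indicator_apply]
    exact if_congr (hiff n x) rfl rfl
  have hm : ∀ n m : ℕ, MeasurableSet (In n ∩ In m) := fun n m =>
    measurableSet_Icc.inter measurableSet_Icc
  have hprod : ∀ (n m : ℕ) (x : ℝ),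
      (In n).indicator (fun _ => c n) x * (starRingEnd ℂ) ((In m).indicator (fun _ => c m) x)
        = (In n ∩ In m).indicator (fun _ => c n * (starRingEnd ℂ) (c m)) x := by
    intro n m x
    by_cases h1 : x ∈ In n <;> by_cases h2 : x ∈ In m <;>
      simp [Set.indicator_of_mem, Set.indicator_of_notMem, h1, h2, Set.mem_inter_iff]
  have hint : ∀ n m : ℕ,
      Integrable (fun x => (In n ∩ In m).indicator (fun _ => c n * (starRingEnd ℂ) (c m)) x) := by
    intro n m
    rw [integrable_indicator_iff (hm n m)]
    apply integrableOn_const (ne_of_lt ?_)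
    calc volume (In n ∩ In m) ≤ volume (In n) := measure_mono Set.inter_subset_left
    _ < ⊤ := by rw [hIn]; exact (Real.volume_Icc ▸ ENNReal.ofReal_lt_top)
  calc ((∫ x : ℝ, ‖∑ n ∈ s.filter (fun n : ℕ => |(n : ℝ) - x| ≤ y / 4), c n‖ ^ 2 : ℝ) : ℂ)
      = ((∫ x : ℝ, ‖A x‖ ^ 2 : ℝ) : ℂ) := by
        congr 1
        apply MeasureTheory.integral_congr_ae
        filter_upwards with x
        rw [hAeq x]
    _ = ∫ x : ℝ, ((‖A x‖ ^ 2 : ℝ) : ℂ) := (_root_.integral_ofReal).symm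
    _ = ∫ x : ℝ, A x * (starRingEnd ℂ) (A x) := by
        apply MeasureTheory.integral_congr_ae
        filter_upwards with x
        rw [Complex.mul_conj']
        push_cast
        ring
    _ = ∫ x : ℝ, ∑ n ∈ s, ∑ m ∈ s,
          (In n ∩ In m).indicator (fun _ => c n * (starRingEnd ℂ) (c m)) x := by
        apply MeasureTheory.integral_congr_ae
        filter_upwards with x
        rw [hA]
        simp only [map_sum]
        rw [Finset.sum_mul_sum]
        exact Finset.sum_congr rfl fun n _ => Finset.sum_congr rfl fun m _ => hprod n m x
    _ = ∑ n ∈ s, ∑ m ∈ s, (c n * (starRingEnd ℂ) (c m)) * ((tri y ((n:ℝ) - (m:ℝ)) : ℝ) : ℂ) := by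
        rw [MeasureTheory.integral_finset_sum s (fun n _ =>
          integrable_finset_sum s (fun m _ => hint n m))]
        apply Finset.sum_congr rfl; intro n _
        rw [MeasureTheory.integral_finset_sum s (fun m _ => hint n m)]
        apply Finset.sum_congr rfl; intro m _
        rw [MeasureTheory.integral_indicator (hm n m), MeasureTheory.setIntegral_const,
          real_smul, hIn]
        rw [measureReal_def, overlap y hy]
        ring

theorem stmt3 :
    ∃ C : ℝ, 0 < C ∧ ∀ (N : ℕ) (c : ℕ → ℂ) (y : ℝ), 0 < y →
      (∫ t in (-(1/y))..(1/y), ‖∑ n ∈ Finset.Icc 1 N, c n * e (t * n)‖ ^ 2) ≤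
        C * y ^ (-2 : ℤ) *
          ∫ x : ℝ, ‖∑ n ∈ (Finset.Icc 1 N).filter (fun n : ℕ => |(n : ℝ) - x| ≤ y / 4), c n‖ ^ 2 := by
  refine ⟨π^2, by positivity, ?_⟩
  intro N c y hy
  set S : ℝ → ℂ := fun t => ∑ n ∈ Finset.Icc 1 N, c n * e (t * n) with hS
  have hScont : Continuous S := by
    rw [hS]
    apply continuous_finset_sum
    intro n _
    exact continuous_const.mul (e_cont n)
  have hSc2 : Continuous fun t => ‖S t‖^2 := (hScont.norm).pow 2
  set B : ℝ := ∑ n ∈ Finset.Icc 1 N, ‖c n‖ with hB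
  have hSB : ∀ t, ‖S t‖ ≤ B := by
    intro t
    rw [hS, hB]
    refine (norm_sum_le _ _).trans ?_
    apply Finset.sum_le_sum
    intro n _
    rw [norm_mul, e_norm, mul_one]
  have hWS_int : Integrable (fun t => Wf y t * ‖S t‖^2) := by
    apply Integrable.mono' ((Wf_integrable y hy).const_mul (B^2))
    · exact ((Wf_meas y).aestronglyMeasurable.mul hSc2.aestronglyMeasurable)
    · filter_upwards with t
      rw [Real.norm_eq_abs, _root_.abs_of_nonneg (mul_nonneg (Wf_nonneg y t) (by positivity))]
      calc Wf y t * ‖S t‖^2 ≤ Wf y t * B^2 := by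
            apply mul_le_mul_of_nonneg_left _ (Wf_nonneg y t)
            have h0 : (0:ℝ) ≤ ‖S t‖ := norm_nonneg _
            nlinarith [hSB t]
        _ = B^2 * Wf y t := mul_comm _ _
  have h1ypos : (0:ℝ) < 1/y := by positivity
  have h1y : -(1/y) ≤ (1/y) := by linarith
  have hstep1 : (∫ t in (-(1/y))..(1/y), ‖S t‖^2)
      ≤ ∫ t in (-(1/y))..(1/y), π^2/y^2 * (Wf y t * ‖S t‖^2) := by
    apply intervalIntegral.integral_mono_on h1y (hSc2.intervalIntegrable _ _)
      ((hWS_int.const_mul _).intervalIntegrable)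
    intro t ht
    have habs : |t| ≤ 1/y := abs_le.mpr ⟨by linarith [ht.1], ht.2⟩
    have hlow := Wf_lower y hy habs
    have hπ : (0:ℝ) < π := Real.pi_pos
    have h2 : 1 ≤ π^2/y^2 * Wf y t := by
      have hc : (0:ℝ) < π^2/y^2 := by positivity
      calc (1:ℝ) = π^2/y^2 * (y/π)^2 := by field_simp
      _ ≤ π^2/y^2 * Wf y t := mul_le_mul_of_nonneg_left hlow hc.le
    calc ‖S t‖^2 = 1 * ‖S t‖^2 := (one_mul _).symm
    _ ≤ (π^2/y^2 * Wf y t) * ‖S t‖^2 := mul_le_mul_of_nonneg_right h2 (by positivity)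
    _ = π^2/y^2 * (Wf y t * ‖S t‖^2) := by ring
  have hstep2 : (∫ t in (-(1/y))..(1/y), π^2/y^2 * (Wf y t * ‖S t‖^2))
      = π^2/y^2 * ∫ t in (-(1/y))..(1/y), Wf y t * ‖S t‖^2 :=
    intervalIntegral.integral_const_mul _ _
  have hstep3 : (∫ t in (-(1/y))..(1/y), Wf y t * ‖S t‖^2) ≤ ∫ t : ℝ, Wf y t * ‖S t‖^2 := by
    rw [intervalIntegral.integral_of_le h1y]
    apply MeasureTheory.setIntegral_le_integral hWS_int
    filter_upwards with t
    exact mul_nonneg (Wf_nonneg y t) (by positivity)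
  have hstep4 : (∫ t : ℝ, Wf y t * ‖S t‖^2)
      = ∫ x : ℝ, ‖∑ n ∈ (Finset.Icc 1 N).filter (fun n : ℕ => |(n : ℝ) - x| ≤ y / 4), c n‖ ^ 2 := by
    have h := (Sside y hy N c).trans (Aside y hy N c).symm
    exact_mod_cast h
  have hy2 : π^2 * y^(-2:ℤ) = π^2/y^2 := by
    have hzy : (y:ℝ) ^ (-2:ℤ) = (y^2)⁻¹ := by
      rw [zpow_neg]
      norm_cast
    rw [hzy, div_eq_mul_inv]
  calc (∫ t in (-(1/y))..(1/y), ‖S t‖^2)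
      ≤ ∫ t in (-(1/y))..(1/y), π^2/y^2 * (Wf y t * ‖S t‖^2) := hstep1
    _ = π^2/y^2 * ∫ t in (-(1/y))..(1/y), Wf y t * ‖S t‖^2 := hstep2
    _ ≤ π^2/y^2 * ∫ t : ℝ, Wf y t * ‖S t‖^2 := by
        apply mul_le_mul_of_nonneg_left hstep3 (by positivity)
    _ = π^2 * y^(-2:ℤ) *
          ∫ x : ℝ, ‖∑ n ∈ (Finset.Icc 1 N).filter (fun n : ℕ => |(n : ℝ) - x| ≤ y / 4), c n‖ ^ 2 := by
        rw [hstep4, hy2]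
end

section
/- Suppose q ≥ 1 and x > 0 are such that for every a with (a,q)=1 we have S(x,q,a) := ∑_{n ≤ x, n ≡ a (mod q)} Λ(n) ≥ x/φ(q). Then ∑_{n ≤ 4x, q | n} G(n) ≥ x²/(4φ(q)), where G(n) = ∑_{k₁+k₂=n} Λ(k₁)Λ(k₂). -/
open ArithmeticFunction MeasureTheory Finset Real


theorem stmt16 (q : ℕ) (hq : 1 ≤ q) (x : ℝ) (hx : 0 < x)
    (hS : ∀ a : ℕ, Nat.Coprime a q →
      (∑ n ∈ (Finset.Icc 1 ⌊x⌋₊).filter (fun n => n % q = a % q), Λ n) ≥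
        x / Nat.totient q) :
    (∑ n ∈ (Finset.Icc 1 ⌊4 * x⌋₊).filter (fun n => q ∣ n), G n) ≥
      x ^ 2 / (4 * Nat.totient q) := by
  classical
  have hΛ : ∀ n : ℕ, 0 ≤ Λ n := fun n => vonMangoldt_nonneg
  have hq0 : 0 < q := hq
  have hφ0 : 0 < q.totient := Nat.totient_pos.mpr hq
  have hφR : (0:ℝ) < (q.totient : ℝ) := by exact_mod_cast hφ0
  set N := ⌊x⌋₊ with hN
  set B : Finset (ℕ × ℕ) :=
    ((Finset.Icc 1 ⌊4*x⌋₊).filter (fun n => q ∣ n)).biUnion Finset.HasAntidiagonal.antidiagonal with hBdef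
  have hLHS : (∑ n ∈ (Finset.Icc 1 ⌊4*x⌋₊).filter (fun n => q ∣ n), G n)
      = ∑ p ∈ B, Λ p.1 * Λ p.2 := by
    rw [hBdef, Finset.sum_biUnion]
    · rfl
    · intro m hm n hn hmn
      simp only [Finset.disjoint_left]
      intro p hp1 hp2
      rw [Finset.HasAntidiagonal.mem_antidiagonal] at hp1 hp2
      exact hmn (hp1 ▸ hp2)
  set A : Finset ℕ := (Finset.range q).filter (fun a => Nat.Coprime a q) with hAdef
  have hAcard : A.card = q.totient := by
    rw [hAdef, Nat.totient_eq_card_coprime]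
    congr 1
    apply Finset.filter_congr
    intro a _
    simp [Nat.coprime_comm]
  set bfun : ℕ → ℕ := fun a => (q - a % q) % q with hbdef
  set Sf : ℕ → Finset ℕ := fun a => (Finset.Icc 1 N).filter (fun n => n % q = a % q) with hSdef
  set T : ℕ → Finset (ℕ × ℕ) := fun a => (Sf a) ×ˢ (Sf (bfun a)) with hTdef
  -- membership facts
  have hmemA : ∀ a ∈ A, a < q ∧ Nat.Coprime a q := by
    intro a ha
    rw [hAdef, Finset.mem_filter, Finset.mem_range] at ha
    exact ha
  have hbcop : ∀ a ∈ A, Nat.Coprime (bfun a) q := by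
    intro a ha
    obtain ⟨hlt, hcop⟩ := hmemA a ha
    rcases eq_or_lt_of_le hq with h1 | h1
    · rw [← h1]; exact Nat.coprime_one_right _
    · have ha1 : 1 ≤ a := by
        rcases Nat.eq_zero_or_pos a with h0 | h0
        · exfalso; rw [h0] at hcop
          have := Nat.coprime_zero_left q |>.mp hcop
          omega
        · exact h0
      have hmod : a % q = a := Nat.mod_eq_of_lt hlt
      have h2 : (q - a % q) % q = q - a := by
        rw [hmod]; exact Nat.mod_eq_of_lt (by omega)
      show Nat.Coprime ((q - a % q) % q) q
      rw [h2]
      have hca : Nat.Coprime (q - a) a := (Nat.coprime_sub_self_left hlt.le).mpr hcop.symm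
      have h3 : Nat.Coprime (q - a) (a + (q - a)) := Nat.coprime_add_self_right.mpr hca
      rwa [show a + (q - a) = q by omega] at h3
  have hmod0 : ∀ a ∈ A, (a % q + bfun a % q) % q = 0 := by
    intro a ha
    obtain ⟨hlt, hcop⟩ := hmemA a ha
    have hmod : a % q = a := Nat.mod_eq_of_lt hlt
    show (a % q + (q - a % q) % q % q) % q = 0
    rw [Nat.mod_mod_of_dvd _ dvd_rfl, hmod]
    rcases Nat.eq_zero_or_pos a with h0 | h0
    · simp [h0, Nat.mod_self]
    · rw [Nat.mod_eq_of_lt (show q - a < q by omega)]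
      have : a + (q - a) = q := by omega
      rw [this, Nat.mod_self]
  -- subset
  have hUB : A.biUnion T ⊆ B := by
    intro p hp
    rw [Finset.mem_biUnion] at hp
    obtain ⟨a, ha, hpT⟩ := hp
    rw [hTdef] at hpT
    simp only [Finset.mem_product, hSdef, Finset.mem_filter, Finset.mem_Icc] at hpT
    obtain ⟨⟨⟨h11, h12⟩, h13⟩, ⟨h21, h22⟩, h23⟩ := hpT
    have hdvd : q ∣ p.1 + p.2 := by
      apply Nat.dvd_of_mod_eq_zero
      rw [Nat.add_mod, h13, h23]
      have := hmod0 a ha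
      rw [Nat.mod_mod_of_dvd _ dvd_rfl] at this ⊢
      exact this
    have hfl : (N:ℝ) ≤ x := Nat.floor_le hx.le
    have h2N : 2 * N ≤ ⌊4*x⌋₊ := by
      apply Nat.le_floor
      push_cast
      nlinarith
    rw [hBdef, Finset.mem_biUnion]
    refine ⟨p.1 + p.2, ?_, ?_⟩
    · rw [Finset.mem_filter, Finset.mem_Icc]
      exact ⟨⟨by omega, by omega⟩, hdvd⟩
    · rw [Finset.HasAntidiagonal.mem_antidiagonal]
  -- product sums
  have hTsum : ∀ a, (∑ p ∈ T a, Λ p.1 * Λ p.2)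
      = (∑ n ∈ Sf a, Λ n) * (∑ n ∈ Sf (bfun a), Λ n) := by
    intro a
    rw [hTdef, Finset.sum_mul_sum, Finset.sum_product]
  have hTlow : ∀ a ∈ A, (x / q.totient) * (x / q.totient) ≤ ∑ p ∈ T a, Λ p.1 * Λ p.2 := by
    intro a ha
    rw [hTsum a]
    have h1 := hS a (hmemA a ha).2
    have h2 := hS (bfun a) (hbcop a ha)
    have hxφ : 0 ≤ x / q.totient := by positivity
    apply mul_le_mul h1 h2 hxφ
    exact Finset.sum_nonneg fun n _ => hΛ n
  -- disjointness of T over A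
  have hTdisj : (↑A : Set ℕ).PairwiseDisjoint T := by
    intro a ha a' ha' hne
    simp only [Finset.disjoint_left]
    intro p hp hp'
    rw [hTdef] at hp hp'
    simp only [Finset.mem_product, hSdef, Finset.mem_filter] at hp hp'
    have h1 := hp.1.2
    have h2 := hp'.1.2
    have hlt := (hmemA a ha).1
    have hlt' := (hmemA a' ha').1
    rw [Nat.mod_eq_of_lt hlt] at h1
    rw [Nat.mod_eq_of_lt hlt'] at h2
    exact hne (h1 ▸ h2)
  calc x ^ 2 / (4 * q.totient) ≤ ∑ a ∈ A, (x / q.totient) * (x / q.totient) := by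
        rw [Finset.sum_const, hAcard, nsmul_eq_mul]
        have heq : (q.totient:ℝ) * (x / q.totient * (x / q.totient)) = x ^ 2 / q.totient := by
          field_simp
        rw [heq, div_le_div_iff₀ (by positivity) hφR]
        nlinarith [sq_nonneg x]
    _ ≤ ∑ a ∈ A, ∑ p ∈ T a, Λ p.1 * Λ p.2 := Finset.sum_le_sum hTlow
    _ = ∑ p ∈ A.biUnion T, Λ p.1 * Λ p.2 := (Finset.sum_biUnion hTdisj).symm
    _ ≤ ∑ p ∈ B, Λ p.1 * Λ p.2 :=
        Finset.sum_le_sum_of_subset_of_nonneg hUB (fun p _ _ => mul_nonneg (hΛ p.1) (hΛ p.2))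
    _ = _ := hLHS.symm
end
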